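/- arXiv:2602.16274 — 6 statements merged into one kernel-verified Lean document; each statement's English description precedes it below -/
import Mathlib

section
/- Let Q* : A → ℝ achieve its maximum uniquely at a*, with gap g := Q*(a*) − max_{a ≠ a*} Q*(a) > 0. Let π₀ be the Dirac distribution at a*. Then for every λ > 0 and every Q : A → ℝ, the total deviation satisfies max_a |σ(Q/λ)(a) − π₀(a)| ≤ ‖Q − Q*‖_∞/λ + |A|·exp(−g/λ). -/
open Finset

/-- Boltzmann (softmax) distribution with temperature `lam`. -/
noncomputable def softmax {A : Type*} [Fintype A] (q : A → ℝ) (lam : ℝ) (a : A) : ℝ :=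
  Real.exp (q a / lam) / ∑ b, Real.exp (q b / lam)

lemma softmax_eq {A : Type*} [Fintype A] [DecidableEq A] (q : A → ℝ) (lam : ℝ) (a : A) :
    softmax q lam a = 1 / (1 + ∑ b ∈ univ.erase a, Real.exp ((q b - q a) / lam)) := by
  have hsum : ∑ b, Real.exp (q b / lam)
      = Real.exp (q a / lam) * (1 + ∑ b ∈ univ.erase a, Real.exp ((q b - q a) / lam)) := by
    rw [mul_add, mul_one, Finset.mul_sum, ← Finset.add_sum_erase _ _ (mem_univ a)]
    congr 1
    refine Finset.sum_congr rfl fun b _ => ?_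
    rw [← Real.exp_add]
    congr 1
    by_cases hl : lam = 0
    · simp [hl]
    · field_simp; ring
  rw [softmax, hsum, div_mul_eq_div_div, div_self (Real.exp_pos _).ne']

lemma erase_sum_nonneg {A : Type*} [Fintype A] [DecidableEq A] (q : A → ℝ) (lam : ℝ) (a : A) :
    0 ≤ ∑ b ∈ univ.erase a, Real.exp ((q b - q a) / lam) :=
  Finset.sum_nonneg fun b _ => (Real.exp_pos _).le

lemma softmax_mem {A : Type*} [Fintype A] [DecidableEq A] (q : A → ℝ) (lam : ℝ) (a : A) :
    0 ≤ softmax q lam a ∧ softmax q lam a ≤ 1 := by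
  rw [softmax_eq]
  have hR := erase_sum_nonneg q lam a
  constructor
  · positivity
  · rw [div_le_one (by linarith)]
    linarith

lemma exp_le_one_add_two_mul {t : ℝ} (ht : 0 ≤ t) (ht1 : t ≤ 1) : Real.exp t ≤ 1 + 2 * t := by
  have h := convexOn_exp.2 (Set.mem_univ (0:ℝ)) (Set.mem_univ (1:ℝ))
    (by linarith : (0:ℝ) ≤ 1 - t) ht (by ring)
  simp only [smul_eq_mul, mul_zero, mul_one, zero_add, Real.exp_zero] at h
  have he : Real.exp 1 ≤ 3 := Real.exp_one_lt_d9.le.trans (by norm_num)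
  nlinarith [h, he, ht]

lemma softmax_lip {A : Type*} [Fintype A] [DecidableEq A] (x y : A → ℝ) (lam t : ℝ)
    (hlam : 0 < lam) (ht : 0 ≤ t) (ht1 : t ≤ 1)
    (h : ∀ b, |x b - y b| ≤ t * lam) (a : A) :
    softmax x lam a - softmax y lam a ≤ t := by
  rw [softmax_eq, softmax_eq]
  set Rx := ∑ b ∈ univ.erase a, Real.exp ((x b - x a) / lam) with hRxdef
  set Ry := ∑ b ∈ univ.erase a, Real.exp ((y b - y a) / lam) with hRydef
  have hRx0 : 0 ≤ Rx := erase_sum_nonneg x lam a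
  have hRy0 : 0 ≤ Ry := erase_sum_nonneg y lam a
  set s := Real.exp t with hsdef
  have hs1 : 1 + t ≤ s := by
    have := Real.add_one_le_exp t; linarith
  have hs2 : s ≤ 1 + 2 * t := exp_le_one_add_two_mul ht ht1
  have hRyle : Ry ≤ s ^ 2 * Rx := by
    rw [hRxdef, Finset.mul_sum]
    refine Finset.sum_le_sum fun b _ => ?_
    have h1 := abs_le.1 (h b)
    have h2 := abs_le.1 (h a)
    have harg : (y b - y a) / lam ≤ (x b - x a) / lam + 2 * t := by
      have hstep : (y b - y a) / lam ≤ (x b - x a + 2 * t * lam) / lam := by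
        gcongr
        linarith [h1.2, h2.1]
      have : (x b - x a + 2 * t * lam) / lam = (x b - x a) / lam + 2 * t := by
        field_simp
      linarith [hstep, this.le]
    calc Real.exp ((y b - y a) / lam) ≤ Real.exp ((x b - x a) / lam + 2 * t) :=
          Real.exp_le_exp.2 harg
      _ = s ^ 2 * Real.exp ((x b - x a) / lam) := by
          rw [hsdef, sq, ← Real.exp_add, ← Real.exp_add]; ring_nf
  have hsRx0 : 0 ≤ s ^ 2 * Rx := by positivity
  have h1p : (0:ℝ) < 1 + Rx := by linarith
  have h2p : (0:ℝ) < 1 + s ^ 2 * Rx := by linarith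
  have h3p : (0:ℝ) < 1 + Ry := by linarith
  have step1 : 1 / (1 + Rx) - 1 / (1 + Ry) ≤ 1 / (1 + Rx) - 1 / (1 + s ^ 2 * Rx) := by
    have : 1 / (1 + s ^ 2 * Rx) ≤ 1 / (1 + Ry) :=
      one_div_le_one_div_of_le h3p (by linarith)
    linarith
  refine step1.trans ?_
  rw [div_sub_div _ _ h1p.ne' h2p.ne', div_le_iff₀ (by positivity)]
  nlinarith [sq_nonneg (1 - s * Rx), mul_nonneg hRx0 (sq_nonneg (s - 1)),
    mul_nonneg ht (sq_nonneg (1 - s * Rx)),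
    mul_nonneg (mul_nonneg ht hRx0) (sq_nonneg (s - 1)),
    mul_nonneg (mul_nonneg ht hRx0) (by nlinarith : (0:ℝ) ≤ s ^ 2 - 1),
    mul_nonneg hRx0 ht]

theorem softmax_vs_greedy {A : Type*} [Fintype A] [DecidableEq A] [Nonempty A]
    (Qstar : A → ℝ) (astar : A) (g : ℝ) (hg : 0 < g)
    (hgap : ∀ a, a ≠ astar → Qstar a ≤ Qstar astar - g)
    (lam : ℝ) (hlam : 0 < lam) (Q : A → ℝ) :
    ∀ a, |softmax Q lam a - (if a = astar then (1 : ℝ) else 0)| ≤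
      (univ.sup' univ_nonempty fun x => |Q x - Qstar x|) / lam +
        (Fintype.card A : ℝ) * Real.exp (-g / lam) := by
  intro a
  set ε := univ.sup' univ_nonempty fun x => |Q x - Qstar x| with hεdef
  have hεb : ∀ b, |Q b - Qstar b| ≤ ε := fun b => le_sup' (fun x => |Q x - Qstar x|) (mem_univ b)
  have hε0 : 0 ≤ ε := (abs_nonneg _).trans (hεb (Classical.arbitrary A))
  have hN1 : (1:ℝ) ≤ (Fintype.card A : ℝ) := by exact_mod_cast Fintype.card_pos
  have hexp0 : (0:ℝ) ≤ Real.exp (-g / lam) := (Real.exp_pos _).le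
  have hmemQ := softmax_mem Q lam a
  by_cases hc : ε / lam ≤ 1
  · -- Lipschitz part
    have hmul : ∀ b, |Q b - Qstar b| ≤ ε / lam * lam := fun b => by
      rw [div_mul_cancel₀ _ hlam.ne']; exact hεb b
    have hlip1 : softmax Q lam a - softmax Qstar lam a ≤ ε / lam :=
      softmax_lip Q Qstar lam (ε / lam) hlam (div_nonneg hε0 hlam.le) hc hmul a
    have hlip2 : softmax Qstar lam a - softmax Q lam a ≤ ε / lam :=
      softmax_lip Qstar Q lam (ε / lam) hlam (div_nonneg hε0 hlam.le) hc
        (fun b => by rw [abs_sub_comm]; exact hmul b) a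
    have hlip : |softmax Q lam a - softmax Qstar lam a| ≤ ε / lam :=
      abs_sub_le_iff.2 ⟨hlip1, hlip2⟩
    -- base part
    have hbase : |softmax Qstar lam a - (if a = astar then (1:ℝ) else 0)| ≤
        (Fintype.card A : ℝ) * Real.exp (-g / lam) := by
      by_cases ha : a = astar
      · subst ha
        rw [if_pos rfl]
        rw [softmax_eq]
        set R := ∑ b ∈ univ.erase a, Real.exp ((Qstar b - Qstar a) / lam) with hRdef
        have hR0 : 0 ≤ R := erase_sum_nonneg Qstar lam a
        have hRle : R ≤ (Fintype.card A : ℝ) * Real.exp (-g / lam) := by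
          have hterm : ∀ b ∈ univ.erase a, Real.exp ((Qstar b - Qstar a) / lam)
              ≤ Real.exp (-g / lam) := by
            intro b hb
            have hbne : b ≠ a := (mem_erase.1 hb).1
            have := hgap b hbne
            apply Real.exp_le_exp.2
            gcongr  -- hope not; use explicit
            · linarith
          calc R ≤ ∑ _b ∈ univ.erase a, Real.exp (-g / lam) :=
                Finset.sum_le_sum hterm
            _ = ((univ.erase a).card : ℝ) * Real.exp (-g / lam) := by
                rw [Finset.sum_const, nsmul_eq_mul]
            _ ≤ (Fintype.card A : ℝ) * Real.exp (-g / lam) := by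
                gcongr
                exact_mod_cast (Finset.card_le_card (Finset.erase_subset _ _)).trans
                  (le_of_eq (Finset.card_univ))
        have h1p : (0:ℝ) < 1 + R := by linarith
        rw [abs_sub_comm, abs_of_nonneg]
        · have : 1 - 1 / (1 + R) = R / (1 + R) := by field_simp; ring
          rw [this]
          calc R / (1 + R) ≤ R / 1 := by gcongr; linarith
            _ = R := div_one R
            _ ≤ _ := hRle
        · have : 1 / (1 + R) ≤ 1 := by rw [div_le_one h1p]; linarith
          linarith
      · simp only [if_neg ha, sub_zero]
        rw [abs_of_nonneg (softmax_mem Qstar lam a).1, softmax_eq]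
        set R := ∑ b ∈ univ.erase a, Real.exp ((Qstar b - Qstar a) / lam) with hRdef
        have hmem : astar ∈ univ.erase a := mem_erase.2 ⟨Ne.symm ha, mem_univ _⟩
        have hgap' : Qstar a ≤ Qstar astar - g := hgap a ha
        have hbig : Real.exp (g / lam) ≤ R := by
          calc Real.exp (g / lam) ≤ Real.exp ((Qstar astar - Qstar a) / lam) := by
                apply Real.exp_le_exp.2; gcongr; linarith
            _ ≤ R := Finset.single_le_sum (f := fun b => Real.exp ((Qstar b - Qstar a) / lam)) (fun b _ => (Real.exp_pos _).le) hmem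
        have hgpos : (0:ℝ) < Real.exp (g / lam) := Real.exp_pos _
        calc 1 / (1 + R) ≤ 1 / Real.exp (g / lam) :=
              one_div_le_one_div_of_le hgpos (by linarith)
          _ = Real.exp (-g / lam) := by rw [one_div, ← Real.exp_neg, neg_div]
          _ ≤ (Fintype.card A : ℝ) * Real.exp (-g / lam) := by nlinarith
    calc |softmax Q lam a - (if a = astar then (1:ℝ) else 0)|
        ≤ |softmax Q lam a - softmax Qstar lam a|
          + |softmax Qstar lam a - (if a = astar then (1:ℝ) else 0)| := abs_sub_le _ _ _
      _ ≤ ε / lam + (Fintype.card A : ℝ) * Real.exp (-g / lam) := add_le_add hlip hbase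
  · push_neg at hc
    have htriv : |softmax Q lam a - (if a = astar then (1:ℝ) else 0)| ≤ 1 := by
      rw [abs_le]
      split_ifs <;> constructor <;> linarith [hmemQ.1, hmemQ.2]
    have hN : (0:ℝ) ≤ (Fintype.card A : ℝ) * Real.exp (-g / lam) := by positivity
    linarith
end

section
/- Let ε ∈ [0,1], λ > 0, and define the smoothed ε-greedy policy f^{(ε,λ,Q)}(a) := ε/|A| + (1−ε)·σ(Q/λ)(a) on a finite action set A. Let Q* have unique maximizer a* with gap g > 0, and let f^{(0,0,Q*)} be the Dirac distribution at a*. Then max_a |f^{(ε,λ,Q)}(a) − f^{(0,0,Q*)}(a)| ≤ ε + ‖Q − Q*‖_∞/λ + |A|·exp(−g/λ). -/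
open Finset

/-- Smoothed ε-greedy policy: mixture of the uniform policy and the softmax policy. -/
noncomputable def segPolicy {A : Type*} [Fintype A] (ε lam : ℝ) (Q : A → ℝ) (a : A) : ℝ :=
  ε / (Fintype.card A : ℝ) + (1 - ε) * softmax Q lam a

lemma key_exp (s : ℝ) (hs : 0 ≤ s) :
    Real.exp (2*s) - 1 ≤ s * (Real.exp (2*s) + 1) := by
  have hmono : Monotone (fun t : ℝ => t * (Real.exp (2*t) + 1) - (Real.exp (2*t) - 1)) := by
    apply monotone_of_deriv_nonneg
    · fun_prop
    · intro t
      have h2 : HasDerivAt (fun t : ℝ => Real.exp (2*t)) (Real.exp (2*t) * 2) t := by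
        exact ((hasDerivAt_id t).const_mul 2).exp.congr_deriv (by simp)
      have hd : HasDerivAt (fun t : ℝ => t * (Real.exp (2*t) + 1) - (Real.exp (2*t) - 1))
          (1 * (Real.exp (2*t) + 1) + t * (Real.exp (2*t) * 2) - Real.exp (2*t) * 2) t :=
        (((hasDerivAt_id t).mul (h2.add_const 1)).sub (h2.sub_const 1))
      rw [hd.deriv]
      have h1 : -(2*t) + 1 ≤ Real.exp (-(2*t)) := Real.add_one_le_exp _
      have hprod : Real.exp (-(2*t)) * Real.exp (2*t) = 1 := by
        rw [← Real.exp_add]; ring_nf; exact Real.exp_zero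
      nlinarith [mul_le_mul_of_nonneg_right h1 (Real.exp_pos (2*t)).le, Real.exp_pos (2*t)]
  have h := hmono hs
  simp only [mul_zero, zero_mul, Real.exp_zero] at h
  linarith

lemma softmax_sub_le {A : Type*} [Fintype A] [DecidableEq A] [Nonempty A]
    (p q : A → ℝ) (s : ℝ) (hs : ∀ b, |p b - q b| ≤ s) (a : A) :
    Real.exp (p a) / (∑ b, Real.exp (p b)) - Real.exp (q a) / (∑ b, Real.exp (q b)) ≤ s := by
  have hs0 : 0 ≤ s := (abs_nonneg _).trans (hs a)
  set U := ∑ b, Real.exp (p b) with hUdef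
  set V := ∑ b, Real.exp (q b) with hVdef
  have hU : 0 < U := Finset.sum_pos (fun b _ => Real.exp_pos _) univ_nonempty
  have hV : 0 < V := Finset.sum_pos (fun b _ => Real.exp_pos _) univ_nonempty
  have hpq : ∀ b, Real.exp (p b) ≤ Real.exp s * Real.exp (q b) := fun b => by
    rw [← Real.exp_add]
    exact Real.exp_le_exp.mpr (by have := abs_le.mp (hs b); linarith)
  have hqp : ∀ b, Real.exp (q b) ≤ Real.exp s * Real.exp (p b) := fun b => by
    rw [← Real.exp_add]
    exact Real.exp_le_exp.mpr (by have := abs_le.mp (hs b); linarith)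
  have hUV : U ≤ Real.exp s * V := by
    rw [hUdef, hVdef, Finset.mul_sum]; exact Finset.sum_le_sum fun b _ => hpq b
  have hVU : V ≤ Real.exp s * U := by
    rw [hUdef, hVdef, Finset.mul_sum]; exact Finset.sum_le_sum fun b _ => hqp b
  set y := Real.exp (p a) / U with hy
  set x := Real.exp (q a) / V with hx
  have hE2 : Real.exp (2*s) = Real.exp s * Real.exp s := by
    rw [← Real.exp_add]; ring_nf
  -- y ≤ e^{2s} x
  have hyx : y ≤ Real.exp (2*s) * x := by
    rw [hy, hx, ← mul_div_assoc, div_le_div_iff₀ hU hV, hE2]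
    nlinarith [hpq a, Real.exp_pos (p a), Real.exp_pos (q a), Real.exp_pos s]
  -- 1 - x ≤ e^{2s} (1 - y)
  have h1y : 1 - y = (∑ b ∈ univ.erase a, Real.exp (p b)) / U := by
    rw [hy, eq_div_iff hU.ne', sub_mul, div_mul_cancel₀ _ hU.ne', one_mul, hUdef,
      ← Finset.add_sum_erase univ _ (mem_univ a)]
    ring
  have h1x : 1 - x = (∑ b ∈ univ.erase a, Real.exp (q b)) / V := by
    rw [hx, eq_div_iff hV.ne', sub_mul, div_mul_cancel₀ _ hV.ne', one_mul, hVdef,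
      ← Finset.add_sum_erase univ _ (mem_univ a)]
    ring
  have hTq : (∑ b ∈ univ.erase a, Real.exp (q b)) ≤ Real.exp s * ∑ b ∈ univ.erase a, Real.exp (p b) := by
    rw [Finset.mul_sum]; exact Finset.sum_le_sum fun b _ => hqp b
  have hTp0 : 0 ≤ ∑ b ∈ univ.erase a, Real.exp (p b) :=
    Finset.sum_nonneg fun b _ => (Real.exp_pos _).le
  have hxy : 1 - x ≤ Real.exp (2*s) * (1 - y) := by
    rw [h1y, h1x, ← mul_div_assoc, div_le_div_iff₀ hV hU, hE2]
    nlinarith [mul_le_mul hTq hUV hU.le (by positivity : (0:ℝ) ≤ Real.exp s * ∑ b ∈ univ.erase a, Real.exp (p b))]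
  have hx0 : 0 ≤ x := div_nonneg (Real.exp_pos _).le hV.le
  have hkey := key_exp s hs0
  nlinarith [Real.exp_pos (2*s)]

lemma abs_softmax_sub_le {A : Type*} [Fintype A] [DecidableEq A] [Nonempty A]
    (Q Qstar : A → ℝ) (lam s : ℝ) (hlam : 0 < lam)
    (hs : ∀ b, |Q b - Qstar b| ≤ s * lam) (a : A) :
    |softmax Q lam a - softmax Qstar lam a| ≤ s := by
  have hs' : ∀ b, |Q b / lam - Qstar b / lam| ≤ s := fun b => by
    rw [div_sub_div_same, abs_div, abs_of_pos hlam, div_le_iff₀ hlam]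
    exact hs b
  have hs'' : ∀ b, |Qstar b / lam - Q b / lam| ≤ s := fun b => by
    rw [abs_sub_comm]; exact hs' b
  rw [abs_sub_le_iff]
  exact ⟨softmax_sub_le _ _ s hs' a, softmax_sub_le _ _ s hs'' a⟩

lemma softmax_dirac {A : Type*} [Fintype A] [DecidableEq A] [Nonempty A]
    (lam : ℝ) (hlam : 0 < lam) (Qstar : A → ℝ) (astar : A) (g : ℝ) (hg : 0 < g)
    (hgap : ∀ a, a ≠ astar → Qstar a ≤ Qstar astar - g) (a : A) :
    |softmax Qstar lam a - (if a = astar then (1:ℝ) else 0)| ≤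
      (Fintype.card A : ℝ) * Real.exp (-g / lam) := by
  set V := ∑ b, Real.exp (Qstar b / lam) with hVdef
  have hV : 0 < V := Finset.sum_pos (fun b _ => Real.exp_pos _) univ_nonempty
  have hVa : Real.exp (Qstar astar / lam) ≤ V :=
    Finset.single_le_sum (f := fun b => Real.exp (Qstar b / lam))
      (fun b _ => (Real.exp_pos _).le) (mem_univ astar)
  have hbound : ∀ b, b ≠ astar → softmax Qstar lam b ≤ Real.exp (-g / lam) := by
    intro b hb
    have h1 : softmax Qstar lam b ≤ Real.exp (Qstar b / lam) / Real.exp (Qstar astar / lam) := by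
      unfold softmax
      gcongr
    have h2 : Real.exp (Qstar b / lam) / Real.exp (Qstar astar / lam) ≤ Real.exp (-g / lam) := by
      rw [← Real.exp_sub, Real.exp_le_exp, div_sub_div_same]
      gcongr
      linarith [hgap b hb]
    exact h1.trans h2
  have hcard1 : (1:ℝ) ≤ (Fintype.card A : ℝ) := by
    exact_mod_cast Fintype.card_pos
  have hexp0 : 0 ≤ Real.exp (-g / lam) := (Real.exp_pos _).le
  by_cases ha : a = astar
  · subst ha
    have hsum : ∑ b, softmax Qstar lam b = 1 := by
      unfold softmax
      rw [← Finset.sum_div, div_self hV.ne']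
    have hsplit : softmax Qstar lam a + ∑ b ∈ univ.erase a, softmax Qstar lam b = 1 := by
      rw [Finset.add_sum_erase univ _ (mem_univ a)]; exact hsum
    have hnn : ∀ b, 0 ≤ softmax Qstar lam b := fun b =>
      div_nonneg (Real.exp_pos _).le hV.le
    have hle1 : softmax Qstar lam a ≤ 1 := by
      have : 0 ≤ ∑ b ∈ univ.erase a, softmax Qstar lam b :=
        Finset.sum_nonneg fun b _ => hnn b
      linarith
    have hT : ∑ b ∈ univ.erase a, softmax Qstar lam b ≤
        ((Fintype.card A : ℝ) - 1) * Real.exp (-g / lam) := by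
      have := Finset.sum_le_sum (fun b (hb : b ∈ univ.erase a) =>
        hbound b (Finset.mem_erase.mp hb).1)
      simpa [Finset.card_erase_of_mem, Fintype.card_pos, mul_comm] using this
    rw [if_pos rfl, abs_of_nonpos (by linarith), neg_sub]
    nlinarith
  · have h0 : (0:ℝ) ≤ softmax Qstar lam a := div_nonneg (Real.exp_pos _).le hV.le
    rw [if_neg ha, sub_zero, abs_of_nonneg h0]
    calc softmax Qstar lam a ≤ Real.exp (-g/lam) := hbound a ha
      _ ≤ (Fintype.card A : ℝ) * Real.exp (-g / lam) := by nlinarith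

theorem seg_vs_greedy {A : Type*} [Fintype A] [DecidableEq A] [Nonempty A]
    (ε lam : ℝ) (hε : ε ∈ Set.Icc (0 : ℝ) 1) (hlam : 0 < lam)
    (Qstar : A → ℝ) (astar : A) (g : ℝ) (hg : 0 < g)
    (hgap : ∀ a, a ≠ astar → Qstar a ≤ Qstar astar - g)
    (Q : A → ℝ) :
    ∀ a, |segPolicy ε lam Q a - (if a = astar then (1 : ℝ) else 0)| ≤
      ε + (univ.sup' univ_nonempty fun x => |Q x - Qstar x|) / lam +
        (Fintype.card A : ℝ) * Real.exp (-g / lam) := by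
  intro a
  obtain ⟨hε0, hε1⟩ := hε
  set δ := univ.sup' univ_nonempty fun x => |Q x - Qstar x| with hδdef
  have hδb : ∀ b, |Q b - Qstar b| ≤ δ := fun b =>
    Finset.le_sup' (fun x => |Q x - Qstar x|) (mem_univ b)
  have hδ0 : 0 ≤ δ := (abs_nonneg _).trans (hδb (Classical.arbitrary A))
  have hsδ : ∀ b, |Q b - Qstar b| ≤ (δ / lam) * lam := fun b => by
    rw [div_mul_cancel₀ _ hlam.ne']; exact hδb b
  have hlip : |softmax Q lam a - softmax Qstar lam a| ≤ δ / lam :=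
    abs_softmax_sub_le Q Qstar lam (δ / lam) hlam hsδ a
  have hdir : |softmax Qstar lam a - (if a = astar then (1:ℝ) else 0)| ≤
      (Fintype.card A : ℝ) * Real.exp (-g / lam) :=
    softmax_dirac lam hlam Qstar astar g hg hgap a
  have hcard1 : (1:ℝ) ≤ (Fintype.card A : ℝ) := by exact_mod_cast Fintype.card_pos
  set D := (if a = astar then (1:ℝ) else 0) with hD
  have hD01 : 0 ≤ D ∧ D ≤ 1 := by
    rw [hD]; split <;> norm_num
  have hsplit : segPolicy ε lam Q a - D =
      ε * (1 / (Fintype.card A : ℝ) - D) + (1 - ε) * (softmax Q lam a - D) := by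
    unfold segPolicy
    field_simp
    ring
  have habs1 : |1 / (Fintype.card A : ℝ) - D| ≤ 1 := by
    have h1 : 0 < 1 / (Fintype.card A : ℝ) := by positivity
    have h2 : 1 / (Fintype.card A : ℝ) ≤ 1 := by
      rw [div_le_one (by linarith)]; exact hcard1
    rw [abs_le]; constructor <;> nlinarith [hD01.1, hD01.2]
  have habs2 : |softmax Q lam a - D| ≤ δ / lam + (Fintype.card A : ℝ) * Real.exp (-g / lam) := by
    calc |softmax Q lam a - D| ≤
        |softmax Q lam a - softmax Qstar lam a| + |softmax Qstar lam a - D| := by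
          have := abs_sub_le (softmax Q lam a) (softmax Qstar lam a) D
          linarith
      _ ≤ δ / lam + (Fintype.card A : ℝ) * Real.exp (-g / lam) := add_le_add hlip hdir
  calc |segPolicy ε lam Q a - D| ≤
      ε * |1 / (Fintype.card A : ℝ) - D| + (1 - ε) * |softmax Q lam a - D| := by
        rw [hsplit]
        refine (abs_add_le _ _).trans ?_
        rw [abs_mul, abs_mul, abs_of_nonneg hε0, abs_of_nonneg (by linarith : (0:ℝ) ≤ 1 - ε)]
    _ ≤ ε + (δ / lam + (Fintype.card A : ℝ) * Real.exp (-g / lam)) := by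
        have hnn : 0 ≤ |softmax Q lam a - D| := abs_nonneg _
        nlinarith [abs_nonneg (1 / (Fintype.card A : ℝ) - D), habs2, habs1, hnn]
    _ = ε + δ / lam + (Fintype.card A : ℝ) * Real.exp (-g / lam) := by ring
end

section
/- Let μ be a probability distribution on the finite set S × A, and for Q : S × A → ℝ define the operator (F̄Q)(s,a) := (1 − μ(s,a))·Q(s,a) + μ(s,a)·( r(s,a) + γ·Σ_{s'} p(s,a,s')·max_{a'} Q(s',a') ). Then F̄ is a contraction in the sup norm with contraction factor at most 1 − (1−γ)·μ_min, where μ_min := min_{(s,a)} μ(s,a): i.e., ‖F̄Q − F̄Q'‖_∞ ≤ (1 − (1−γ)·μ_min)·‖Q − Q'‖_∞ for all Q, Q'. -/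
open Finset

theorem averaged_bellman_contraction
    {S A : Type*} [Fintype S] [Fintype A] [Nonempty S] [Nonempty A]
    (p : S → A → S → ℝ) (hp0 : ∀ s a s', 0 ≤ p s a s') (hp1 : ∀ s a, ∑ s', p s a s' = 1)
    (r : S → A → ℝ) (γ : ℝ) (hγ : γ ∈ Set.Ioo (0 : ℝ) 1)
    (μ : S → A → ℝ) (hμ0 : ∀ s a, 0 ≤ μ s a) (hμ1 : ∑ s, ∑ a, μ s a = 1) :
    ∀ Q Q' : S → A → ℝ, ∀ s a,
      |((1 - μ s a) * Q s a +
          μ s a * (r s a + γ * ∑ s', p s a s' * (univ.sup' univ_nonempty fun a' => Q s' a'))) -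
        ((1 - μ s a) * Q' s a +
          μ s a * (r s a + γ * ∑ s', p s a s' * (univ.sup' univ_nonempty fun a' => Q' s' a')))| ≤
      (1 - (1 - γ) * (univ.inf' univ_nonempty fun sa : S × A => μ sa.1 sa.2)) *
        (univ.sup' univ_nonempty fun sa : S × A => |Q sa.1 sa.2 - Q' sa.1 sa.2|) := by
  intro Q Q' s a
  set M : ℝ := univ.sup' univ_nonempty fun sa : S × A => |Q sa.1 sa.2 - Q' sa.1 sa.2| with hMdef
  have hQle : ∀ s a, |Q s a - Q' s a| ≤ M := fun s a =>
    le_sup' (f := fun sa : S × A => |Q sa.1 sa.2 - Q' sa.1 sa.2|) (mem_univ (s, a))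
  have hM0 : 0 ≤ M := le_trans (abs_nonneg _) (hQle s a)
  -- sup' difference bound
  have hsup : ∀ s', |(univ.sup' univ_nonempty fun a' => Q s' a') -
      (univ.sup' univ_nonempty fun a' => Q' s' a')| ≤ M := by
    intro s'
    rw [abs_sub_le_iff]
    constructor
    · rw [sub_le_iff_le_add']
      apply sup'_le
      intro a' _
      calc Q s' a' ≤ Q' s' a' + M := by
            have := hQle s' a'
            have := abs_le.mp this
            linarith [this.2]
        _ ≤ (univ.sup' univ_nonempty fun a' => Q' s' a') + M := by
            have := le_sup' (fun a' => Q' s' a') (mem_univ a'); linarith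
    · rw [sub_le_iff_le_add']
      apply sup'_le
      intro a' _
      calc Q' s' a' ≤ Q s' a' + M := by
            have := abs_le.mp (hQle s' a')
            linarith [this.1]
        _ ≤ (univ.sup' univ_nonempty fun a' => Q s' a') + M := by
            have := le_sup' (fun a' => Q s' a') (mem_univ a'); linarith
  have hμ1' : μ s a ≤ 1 := by
    rw [← hμ1]
    calc μ s a ≤ ∑ a', μ s a' :=
          Finset.single_le_sum (fun i _ => hμ0 s i) (mem_univ a)
      _ ≤ ∑ s', ∑ a', μ s' a' :=
          Finset.single_le_sum (f := fun s' => ∑ a', μ s' a')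
            (fun i _ => Finset.sum_nonneg fun j _ => hμ0 i j) (mem_univ s)
  obtain ⟨hγ0, hγ1⟩ := hγ
  have hminf : (univ.inf' univ_nonempty fun sa : S × A => μ sa.1 sa.2) ≤ μ s a :=
    inf'_le (f := fun sa : S × A => μ sa.1 sa.2) (mem_univ (s, a))
  -- bound the sum term
  have hsum : |∑ s', p s a s' * ((univ.sup' univ_nonempty fun a' => Q s' a') -
      (univ.sup' univ_nonempty fun a' => Q' s' a'))| ≤ M := by
    calc |∑ s', p s a s' * ((univ.sup' univ_nonempty fun a' => Q s' a') -
          (univ.sup' univ_nonempty fun a' => Q' s' a'))|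
        ≤ ∑ s', |p s a s' * ((univ.sup' univ_nonempty fun a' => Q s' a') -
          (univ.sup' univ_nonempty fun a' => Q' s' a'))| := Finset.abs_sum_le_sum_abs _ _
      _ ≤ ∑ s', p s a s' * M := by
          apply Finset.sum_le_sum
          intro s' _
          rw [abs_mul, abs_of_nonneg (hp0 s a s')]
          exact mul_le_mul_of_nonneg_left (hsup s') (hp0 s a s')
      _ = M := by rw [← Finset.sum_mul, hp1, one_mul]
  have key :
      ((1 - μ s a) * Q s a + μ s a * (r s a + γ * ∑ s', p s a s' *
        (univ.sup' univ_nonempty fun a' => Q s' a'))) -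
      ((1 - μ s a) * Q' s a + μ s a * (r s a + γ * ∑ s', p s a s' *
        (univ.sup' univ_nonempty fun a' => Q' s' a'))) =
      (1 - μ s a) * (Q s a - Q' s a) + μ s a * γ *
        (∑ s', p s a s' * ((univ.sup' univ_nonempty fun a' => Q s' a') -
          (univ.sup' univ_nonempty fun a' => Q' s' a'))) := by
    have hd : (∑ s', p s a s' * (univ.sup' univ_nonempty fun a' => Q s' a')) -
        (∑ s', p s a s' * (univ.sup' univ_nonempty fun a' => Q' s' a')) =
        ∑ s', p s a s' * ((univ.sup' univ_nonempty fun a' => Q s' a') -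
          (univ.sup' univ_nonempty fun a' => Q' s' a')) := by
      rw [← Finset.sum_sub_distrib]
      exact Finset.sum_congr rfl fun _ _ => (mul_sub _ _ _).symm
    rw [← hd]; ring
  rw [key]
  calc |(1 - μ s a) * (Q s a - Q' s a) + μ s a * γ * _|
      ≤ |(1 - μ s a) * (Q s a - Q' s a)| + |μ s a * γ *
        (∑ s', p s a s' * ((univ.sup' univ_nonempty fun a' => Q s' a') -
          (univ.sup' univ_nonempty fun a' => Q' s' a')))| := abs_add_le _ _
    _ ≤ (1 - μ s a) * M + μ s a * γ * M := by
        gcongr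
        · rw [abs_mul, abs_of_nonneg (by linarith : (0:ℝ) ≤ 1 - μ s a)]
          exact mul_le_mul_of_nonneg_left (hQle s a) (by linarith)
        · rw [abs_mul, abs_of_nonneg (mul_nonneg (hμ0 s a) hγ0.le)]
          exact mul_le_mul_of_nonneg_left hsum (mul_nonneg (hμ0 s a) hγ0.le)
    _ ≤ (1 - (1 - γ) * (univ.inf' univ_nonempty fun sa : S × A => μ sa.1 sa.2)) * M := by
        have h1 : (1 - γ) * (univ.inf' univ_nonempty fun sa : S × A => μ sa.1 sa.2) ≤
            (1 - γ) * μ s a := mul_le_mul_of_nonneg_left hminf (by linarith)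
        have h2 : (1 - (1 - γ) * μ s a) * M ≤
            (1 - (1 - γ) * (univ.inf' univ_nonempty fun sa : S × A => μ sa.1 sa.2)) * M :=
          mul_le_mul_of_nonneg_right (by linarith) hM0
        nlinarith [h2]
end

section
/- Let P and P' be row-stochastic matrices on a finite state space S, let r : S → [0, R_max], and γ ∈ (0,1). Define V(s) := Σ_{ℓ≥0} γ^ℓ Σ_j (P^ℓ)(s,j)·r(j) and V'(s) analogously with P'. Then for every state s, |V(s) − V'(s)| ≤ R_max·‖P − P'‖_∞·γ/(1−γ)². -/
set_option linter.unusedSectionVars false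

open Finset

/-- Max over rows of the ℓ¹-norm of the row. -/
noncomputable def rowNorm {S : Type*} [Fintype S] [Nonempty S] (A : Matrix S S ℝ) : ℝ :=
  univ.sup' univ_nonempty (fun i => ∑ j, |A i j|)

section aux
variable {S : Type*} [Fintype S] [Nonempty S] [DecidableEq S]

lemma row_le_rowNorm (A : Matrix S S ℝ) (i : S) : ∑ j, |A i j| ≤ rowNorm A := by
  unfold rowNorm; exact le_sup' (fun i => ∑ j, |A i j|) (mem_univ i)

lemma rowNorm_nonneg (A : Matrix S S ℝ) : 0 ≤ rowNorm A := by
  obtain ⟨i⟩ := (inferInstance : Nonempty S)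
  exact le_trans (Finset.sum_nonneg fun j _ => abs_nonneg _) (row_le_rowNorm A i)

lemma pow_entry_nonneg (P : Matrix S S ℝ) (hP0 : ∀ i j, 0 ≤ P i j) :
    ∀ n i j, 0 ≤ (P ^ n) i j := by
  intro n
  induction n with
  | zero => intro i j; rw [pow_zero]; by_cases h : i = j <;> simp [Matrix.one_apply, h]
  | succ n ih =>
    intro i j
    rw [pow_succ, Matrix.mul_apply]
    exact Finset.sum_nonneg fun k _ => mul_nonneg (ih i k) (hP0 k j)

lemma pow_row_sum (P : Matrix S S ℝ) (hP1 : ∀ i, ∑ j, P i j = 1) :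
    ∀ n i, ∑ j, (P ^ n) i j = 1 := by
  intro n
  induction n with
  | zero => intro i; rw [pow_zero]; simp [Matrix.one_apply]
  | succ n ih =>
    intro i
    simp only [pow_succ, Matrix.mul_apply]
    rw [Finset.sum_comm]
    calc ∑ k, ∑ j, (P ^ n) i k * P k j = ∑ k, (P ^ n) i k * ∑ j, P k j := by
          simp [Finset.mul_sum]
      _ = 1 := by simp [hP1, ih i]

lemma telescope (P P' : Matrix S S ℝ)
    (hP0 : ∀ i j, 0 ≤ P i j) (hP1 : ∀ i, ∑ j, P i j = 1)
    (hP'0 : ∀ i j, 0 ≤ P' i j) (hP'1 : ∀ i, ∑ j, P' i j = 1) :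
    ∀ (n : ℕ) (i : S), ∑ j, |(P ^ n) i j - (P' ^ n) i j| ≤ (n : ℝ) * rowNorm (P - P') := by
  intro n
  induction n with
  | zero => intro i; simp
  | succ n ih =>
    intro i
    have hdecomp : ∀ j, (P ^ (n+1)) i j - (P' ^ (n+1)) i j =
        (∑ k, (P ^ n) i k * ((P - P') k j)) +
        ∑ k, ((P ^ n) i k - (P' ^ n) i k) * P' k j := by
      intro j
      simp only [pow_succ, Matrix.mul_apply, Matrix.sub_apply]
      rw [← Finset.sum_add_distrib, ← Finset.sum_sub_distrib]
      congr 1; ext k; ring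
    calc ∑ j, |(P ^ (n+1)) i j - (P' ^ (n+1)) i j|
        ≤ ∑ j, (|∑ k, (P ^ n) i k * ((P - P') k j)| +
            |∑ k, ((P ^ n) i k - (P' ^ n) i k) * P' k j|) := by
          refine Finset.sum_le_sum fun j _ => ?_
          rw [hdecomp j]; exact abs_add_le _ _
      _ = (∑ j, |∑ k, (P ^ n) i k * ((P - P') k j)|) +
            ∑ j, |∑ k, ((P ^ n) i k - (P' ^ n) i k) * P' k j| :=
          Finset.sum_add_distrib
      _ ≤ rowNorm (P - P') + n * rowNorm (P - P') := by
          gcongr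
          · calc ∑ j, |∑ k, (P ^ n) i k * ((P - P') k j)|
                ≤ ∑ j, ∑ k, (P ^ n) i k * |(P - P') k j| := by
                  refine Finset.sum_le_sum fun j _ => ?_
                  refine le_trans (Finset.abs_sum_le_sum_abs _ _) ?_
                  refine Finset.sum_le_sum fun k _ => ?_
                  rw [abs_mul, abs_of_nonneg (pow_entry_nonneg P hP0 n i k)]
              _ = ∑ k, (P ^ n) i k * ∑ j, |(P - P') k j| := by
                  rw [Finset.sum_comm]; simp [Finset.mul_sum]
              _ ≤ ∑ k, (P ^ n) i k * rowNorm (P - P') := by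
                  refine Finset.sum_le_sum fun k _ => ?_
                  exact mul_le_mul_of_nonneg_left (row_le_rowNorm _ k)
                    (pow_entry_nonneg P hP0 n i k)
              _ = rowNorm (P - P') := by
                  rw [← Finset.sum_mul, pow_row_sum P hP1 n i, one_mul]
          · calc ∑ j, |∑ k, ((P ^ n) i k - (P' ^ n) i k) * P' k j|
                ≤ ∑ j, ∑ k, |(P ^ n) i k - (P' ^ n) i k| * P' k j := by
                  refine Finset.sum_le_sum fun j _ => ?_
                  refine le_trans (Finset.abs_sum_le_sum_abs _ _) ?_
                  refine Finset.sum_le_sum fun k _ => ?_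
                  rw [abs_mul, abs_of_nonneg (hP'0 k j)]
              _ = ∑ k, |(P ^ n) i k - (P' ^ n) i k| * ∑ j, P' k j := by
                  rw [Finset.sum_comm]; simp [Finset.mul_sum]
              _ = ∑ k, |(P ^ n) i k - (P' ^ n) i k| := by simp [hP'1]
              _ ≤ n * rowNorm (P - P') := ih i
      _ = (n + 1 : ℕ) * rowNorm (P - P') := by push_cast; ring

end aux

theorem value_function_perturbation {S : Type*} [Fintype S] [Nonempty S] [DecidableEq S]
    (P P' : Matrix S S ℝ)
    (hP0 : ∀ i j, 0 ≤ P i j) (hP1 : ∀ i, ∑ j, P i j = 1)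
    (hP'0 : ∀ i j, 0 ≤ P' i j) (hP'1 : ∀ i, ∑ j, P' i j = 1)
    (r : S → ℝ) (Rmax γ : ℝ)
    (hr : ∀ s, r s ∈ Set.Icc (0 : ℝ) Rmax) (hγ : γ ∈ Set.Ioo (0 : ℝ) 1) (s : S) :
    |(∑' ℓ : ℕ, γ ^ ℓ * ∑ j, (P ^ ℓ) s j * r j) -
        (∑' ℓ : ℕ, γ ^ ℓ * ∑ j, (P' ^ ℓ) s j * r j)| ≤
      Rmax * rowNorm (P - P') * (γ / (1 - γ) ^ 2) := by
  obtain ⟨hγ0, hγ1⟩ := hγ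
  set D := rowNorm (P - P') with hD
  have hRmax : 0 ≤ Rmax := le_trans (hr s).1 (hr s).2
  set f : ℕ → ℝ := fun ℓ => γ ^ ℓ * ∑ j, (P ^ ℓ) s j * r j with hf
  set g : ℕ → ℝ := fun ℓ => γ ^ ℓ * ∑ j, (P' ^ ℓ) s j * r j with hg
  have hbound : ∀ (Q : Matrix S S ℝ), (∀ i j, 0 ≤ Q i j) → (∀ i, ∑ j, Q i j = 1) →
      ∀ ℓ, ‖γ ^ ℓ * ∑ j, (Q ^ ℓ) s j * r j‖ ≤ Rmax * γ ^ ℓ := by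
    intro Q hQ0 hQ1 ℓ
    rw [Real.norm_eq_abs, abs_mul, abs_of_nonneg (pow_nonneg hγ0.le ℓ)]
    have h1 : |∑ j, (Q ^ ℓ) s j * r j| ≤ Rmax := by
      rw [abs_of_nonneg (Finset.sum_nonneg fun j _ =>
        mul_nonneg (pow_entry_nonneg Q hQ0 ℓ s j) (hr j).1)]
      calc ∑ j, (Q ^ ℓ) s j * r j ≤ ∑ j, (Q ^ ℓ) s j * Rmax :=
            Finset.sum_le_sum fun j _ => mul_le_mul_of_nonneg_left (hr j).2
              (pow_entry_nonneg Q hQ0 ℓ s j)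
        _ = Rmax := by rw [← Finset.sum_mul, pow_row_sum Q hQ1 ℓ s, one_mul]
    calc γ ^ ℓ * |∑ j, (Q ^ ℓ) s j * r j| ≤ γ ^ ℓ * Rmax :=
          mul_le_mul_of_nonneg_left h1 (pow_nonneg hγ0.le ℓ)
      _ = Rmax * γ ^ ℓ := mul_comm _ _
  have hgeo : Summable fun ℓ : ℕ => Rmax * γ ^ ℓ :=
    (summable_geometric_of_lt_one hγ0.le hγ1).mul_left Rmax
  have hfs : Summable f := Summable.of_norm_bounded hgeo (hbound P hP0 hP1)
  have hgs : Summable g := Summable.of_norm_bounded hgeo (hbound P' hP'0 hP'1)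
  have htermbound : ∀ ℓ : ℕ, ‖f ℓ - g ℓ‖ ≤ Rmax * D * ((ℓ : ℝ) * γ ^ ℓ) := by
    intro ℓ
    have h1 : f ℓ - g ℓ = γ ^ ℓ * ∑ j, ((P ^ ℓ) s j - (P' ^ ℓ) s j) * r j := by
      simp only [hf, hg, ← mul_sub, ← Finset.sum_sub_distrib]
      congr 2; ext j; ring
    rw [Real.norm_eq_abs, h1, abs_mul, abs_of_nonneg (pow_nonneg hγ0.le ℓ)]
    have h2 : |∑ j, ((P ^ ℓ) s j - (P' ^ ℓ) s j) * r j| ≤ Rmax * ((ℓ : ℝ) * D) := by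
      calc |∑ j, ((P ^ ℓ) s j - (P' ^ ℓ) s j) * r j|
          ≤ ∑ j, |(P ^ ℓ) s j - (P' ^ ℓ) s j| * Rmax := by
            refine le_trans (Finset.abs_sum_le_sum_abs _ _) (Finset.sum_le_sum fun j _ => ?_)
            rw [abs_mul]
            exact mul_le_mul_of_nonneg_left
              (abs_le.mpr ⟨by linarith [(hr j).1, hRmax], (hr j).2⟩) (abs_nonneg _)
        _ = (∑ j, |(P ^ ℓ) s j - (P' ^ ℓ) s j|) * Rmax := by rw [Finset.sum_mul]
        _ ≤ ((ℓ : ℝ) * D) * Rmax := by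
            refine mul_le_mul_of_nonneg_right ?_ hRmax
            exact telescope P P' hP0 hP1 hP'0 hP'1 ℓ s
        _ = Rmax * ((ℓ : ℝ) * D) := by ring
    calc γ ^ ℓ * |∑ j, ((P ^ ℓ) s j - (P' ^ ℓ) s j) * r j|
        ≤ γ ^ ℓ * (Rmax * ((ℓ : ℝ) * D)) :=
          mul_le_mul_of_nonneg_left h2 (pow_nonneg hγ0.le ℓ)
      _ = Rmax * D * ((ℓ : ℝ) * γ ^ ℓ) := by ring
  have hγnorm : ‖γ‖ < 1 := by rw [Real.norm_eq_abs, abs_of_pos hγ0]; exact hγ1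
  have hcsum : Summable fun ℓ : ℕ => (ℓ : ℝ) * γ ^ ℓ := by
    have := summable_pow_mul_geometric_of_norm_lt_one 1 hγnorm (R := ℝ)
    simpa using this
  have hCsum : Summable fun ℓ : ℕ => Rmax * D * ((ℓ : ℝ) * γ ^ ℓ) := hcsum.mul_left _
  have hnormsum : Summable fun ℓ : ℕ => ‖f ℓ - g ℓ‖ :=
    Summable.of_nonneg_of_le (fun ℓ => norm_nonneg _) htermbound hCsum
  rw [← Summable.tsum_sub hfs hgs]
  calc |∑' ℓ : ℕ, (f ℓ - g ℓ)| ≤ ∑' ℓ : ℕ, ‖f ℓ - g ℓ‖ := by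
        rw [← Real.norm_eq_abs]; exact norm_tsum_le_tsum_norm hnormsum
    _ ≤ ∑' ℓ : ℕ, Rmax * D * ((ℓ : ℝ) * γ ^ ℓ) := Summable.tsum_le_tsum htermbound hnormsum hCsum
    _ = Rmax * D * ∑' ℓ : ℕ, (ℓ : ℝ) * γ ^ ℓ := tsum_mul_left
    _ = Rmax * D * (γ / (1 - γ) ^ 2) := by
        rw [tsum_coe_mul_geometric_of_norm_lt_one hγnorm]
end

section
/- Let a, b > 0, ρ ∈ (0,1], ρ' ∈ (ρ, 2], n₀ ∈ ℕ, and define a_n := a/(n+n₀)^ρ and b_n := b/(n+n₀)^{ρ'}, assuming a_n ∈ [0,1] for all n. Define S_n := Σ_{i=0}^{n-1} b_i · Π_{j=i+1}^{n-1} (1 − a_j). If ρ = 1, ρ' ∈ (1,2], and a ≥ 2(ρ'−1), then S_n ≤ 2·b_n/a_n for all n ≥ 1. -/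
open Finset

/-- Core convexity inequality: for `0 < q ≤ 1` and `m ≥ 1`,
`m^(-q) - (m+1)^(-q) ≤ q * m^(-q-1)`. -/
lemma core_ineq (q m : ℝ) (hq0 : 0 < q) (hq1 : q ≤ 1) (hm : 1 ≤ m) :
    m ^ (-q) - (m + 1) ^ (-q) ≤ q * m ^ (-q - 1) := by
  have hm0 : (0:ℝ) < m := lt_of_lt_of_le one_pos hm
  have hm1 : (0:ℝ) < m + 1 := by linarith
  -- Bernoulli: (1 + 1/m)^q ≤ 1 + q/m
  have hbern : (1 + 1/m) ^ q ≤ 1 + q * (1/m) :=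
    rpow_one_add_le_one_add_mul_self (by
      have h : (0:ℝ) ≤ 1/m := by positivity
      linarith) hq0.le hq1
  have h1 : (m + 1) ^ q ≤ m ^ q + q * m ^ (q - 1) := by
    have hmeq : m + 1 = m * (1 + 1/m) := by field_simp
    have : (m + 1) ^ q = m ^ q * (1 + 1/m) ^ q := by
      rw [hmeq, Real.mul_rpow hm0.le (by positivity)]
    rw [this]
    have h2 : m ^ q * (1 + 1/m) ^ q ≤ m ^ q * (1 + q * (1/m)) := by
      exact mul_le_mul_of_nonneg_left hbern (Real.rpow_nonneg hm0.le _)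
    refine h2.trans (le_of_eq ?_)
    have hpow : m ^ (q - 1) = m ^ q / m := by
      rw [Real.rpow_sub hm0, Real.rpow_one]
    rw [hpow]; field_simp
  have hmq : (0:ℝ) < m ^ q := Real.rpow_pos_of_pos hm0 _
  have hm1q : (0:ℝ) < (m + 1) ^ q := Real.rpow_pos_of_pos hm1 _
  have hrw : m ^ (-q) - (m + 1) ^ (-q)
      = ((m + 1) ^ q - m ^ q) * (m ^ (-q) * (m + 1) ^ (-q)) := by
    rw [Real.rpow_neg hm0.le, Real.rpow_neg hm1.le]
    field_simp
  rw [hrw]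
  have hmono : (m + 1) ^ (-q) ≤ m ^ (-q) :=
    Real.rpow_le_rpow_of_nonpos hm0 (by linarith) (by linarith)
  have hfac : (m + 1) ^ q - m ^ q ≤ q * m ^ (q - 1) := by linarith
  have hfac0 : (0:ℝ) ≤ (m + 1) ^ q - m ^ q := by
    have : m ^ q ≤ (m + 1) ^ q :=
      Real.rpow_le_rpow hm0.le (by linarith) hq0.le
    linarith
  have hprod : m ^ (-q) * (m + 1) ^ (-q) ≤ m ^ (-q) * m ^ (-q) := by
    exact mul_le_mul_of_nonneg_left hmono (Real.rpow_nonneg hm0.le _)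
  calc ((m + 1) ^ q - m ^ q) * (m ^ (-q) * (m + 1) ^ (-q))
      ≤ (q * m ^ (q - 1)) * (m ^ (-q) * m ^ (-q)) := by
        apply mul_le_mul hfac hprod (by positivity)
        positivity
    _ = q * m ^ (-q - 1) := by
        rw [← Real.rpow_add hm0, mul_assoc, ← Real.rpow_add hm0]
        ring_nf


/-- Key recursion step inequality. -/
lemma key_step (a b ρ' m : ℝ) (ha : 0 < a) (hb : 0 < b) (hρ'1 : 1 < ρ') (hρ'2 : ρ' ≤ 2)
    (haρ' : 2 * (ρ' - 1) ≤ a) (hm : 1 ≤ m) :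
    2 * (b / m ^ ρ') / (a / m) - b / m ^ ρ' ≤ 2 * (b / (m + 1) ^ ρ') / (a / (m + 1)) := by
  have hm0 : (0:ℝ) < m := lt_of_lt_of_le one_pos hm
  have hm1 : (0:ℝ) < m + 1 := by linarith
  have hc := core_ineq (ρ' - 1) m (by linarith) (by linarith) hm
  have hX : (0:ℝ) < m ^ ρ' := Real.rpow_pos_of_pos hm0 _
  have hY : (0:ℝ) < (m + 1) ^ ρ' := Real.rpow_pos_of_pos hm1 _
  have e1 : m ^ (-(ρ' - 1)) = m / m ^ ρ' := by
    rw [show -(ρ' - 1) = 1 - ρ' by ring, Real.rpow_sub hm0, Real.rpow_one]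
  have e2 : (m + 1) ^ (-(ρ' - 1)) = (m + 1) / (m + 1) ^ ρ' := by
    rw [show -(ρ' - 1) = 1 - ρ' by ring, Real.rpow_sub hm1, Real.rpow_one]
  have e3 : m ^ (-(ρ' - 1) - 1) = (m ^ ρ')⁻¹ := by
    rw [show -(ρ' - 1) - 1 = -ρ' by ring, Real.rpow_neg hm0.le]
  rw [e1, e2, e3] at hc
  -- hc : m / m^ρ' - (m+1)/(m+1)^ρ' ≤ (ρ'-1) * (m^ρ')⁻¹
  have g1 : 2 * (b / m ^ ρ') / (a / m) = 2 * b / a * (m / m ^ ρ') := by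
    field_simp
  have g2 : 2 * (b / (m + 1) ^ ρ') / (a / (m + 1)) = 2 * b / a * ((m + 1) / (m + 1) ^ ρ') := by
    field_simp
  rw [g1, g2]
  have hba : 0 < 2 * b / a := by positivity
  have h4 : 2 * b / a * (m / m ^ ρ' - (m + 1) / (m + 1) ^ ρ')
      ≤ 2 * b / a * ((ρ' - 1) * (m ^ ρ')⁻¹) :=
    mul_le_mul_of_nonneg_left hc hba.le
  have h5 : 2 * b / a * ((ρ' - 1) * (m ^ ρ')⁻¹) ≤ b / m ^ ρ' := by
    rw [div_eq_mul_inv b]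
    have hinv : (0:ℝ) ≤ (m ^ ρ')⁻¹ := by positivity
    have : 2 * b / a * (ρ' - 1) ≤ b := by
      rw [div_mul_eq_mul_div, div_le_iff₀ ha]
      nlinarith
    nlinarith
  linarith

theorem stepsize_comparison_rho_one (a b ρ ρ' : ℝ) (n₀ : ℕ)
    (ha : 0 < a) (hb : 0 < b)
    (hρ : ρ = 1) (hρ'1 : 1 < ρ') (hρ'2 : ρ' ≤ 2) (haρ' : 2 * (ρ' - 1) ≤ a)
    (ha01 : ∀ n : ℕ, a / ((n : ℝ) + n₀) ^ ρ ∈ Set.Icc (0 : ℝ) 1) :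
    ∀ n : ℕ, 1 ≤ n →
      ∑ i ∈ Finset.range n,
          (b / ((i : ℝ) + n₀) ^ ρ') * ∏ j ∈ Finset.Ico (i + 1) n, (1 - a / ((j : ℝ) + n₀) ^ ρ) ≤
        2 * (b / ((n : ℝ) + n₀) ^ ρ') / (a / ((n : ℝ) + n₀) ^ ρ) := by
  subst hρ
  simp only [Real.rpow_one] at ha01 ⊢
  intro n hn
  induction n, hn using Nat.le_induction with
  | base =>
    -- n = 1
    simp only [Finset.sum_range_one, Finset.Ico_self, Finset.prod_empty, mul_one,
      Nat.cast_zero, Nat.cast_one, zero_add]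
    rcases Nat.eq_zero_or_pos n₀ with h0 | hpos
    · subst h0
      simp only [Nat.cast_zero, add_zero]
      rw [Real.zero_rpow (by linarith : ρ' ≠ 0)]
      simp only [div_zero]
      have : (0:ℝ) < 2 * (b / (1:ℝ) ^ ρ') / (a / 1) := by
        rw [Real.one_rpow]; positivity
      linarith [this]
    · set N : ℝ := (n₀ : ℝ) with hN
      have hN1 : (1:ℝ) ≤ N := by
        rw [hN]; exact_mod_cast hpos
      have hN0 : (0:ℝ) < N := by linarith
      have hN10 : (0:ℝ) < 1 + N := by linarith
      have haN : a ≤ N := by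
        have h := (ha01 0).2
        simp only [Nat.cast_zero, zero_add] at h
        exact (div_le_one hN0).mp h
      have hX : (0:ℝ) < N ^ ρ' := Real.rpow_pos_of_pos hN0 _
      have hY : (0:ℝ) < (1 + N) ^ ρ' := Real.rpow_pos_of_pos hN10 _
      set x : ℝ := N / (1 + N) with hx
      have hx0 : 0 < x := by positivity
      have hx1 : x ≤ 1 := by
        rw [hx, div_le_one hN10]; linarith
      have hxhalf : (1:ℝ)/2 ≤ x := by
        rw [hx, le_div_iff₀ hN10]; linarith
      have h3 : x ≤ x ^ (ρ' - 1) := by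
        have := Real.rpow_le_rpow_of_exponent_ge hx0 hx1 (by linarith : ρ' - 1 ≤ 1)
        rwa [Real.rpow_one] at this
      have e : x ^ ρ' = x * x ^ (ρ' - 1) := by
        rw [show ρ' = 1 + (ρ' - 1) by ring]
        rw [Real.rpow_add hx0, Real.rpow_one]
        ring_nf
      have hxρ : x ≤ 2 * x ^ ρ' := by
        rw [e]; nlinarith
      have hXY : N ^ ρ' = x ^ ρ' * (1 + N) ^ ρ' := by
        rw [hx, Real.div_rpow hN0.le hN10.le]
        field_simp
      rw [div_le_div_iff₀ hX (by positivity)]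
      have hEq : 2 * (b / (1 + N) ^ ρ') * N ^ ρ' = 2 * b * x ^ ρ' := by
        rw [hXY]; field_simp
      rw [hEq]
      have hax : a / (1 + N) ≤ x := by rw [hx]; gcongr
      nlinarith [mul_le_mul_of_nonneg_left hax hb.le,
        mul_le_mul_of_nonneg_left hxρ hb.le]
  | succ n hn ih =>
    have hcast : ((n:ℝ) + 1) = ((n + 1 : ℕ) : ℝ) := by push_cast; ring
    have hm : (1:ℝ) ≤ (n:ℝ) + n₀ := by
      have : (1:ℝ) ≤ (n:ℝ) := by exact_mod_cast hn
      have : (0:ℝ) ≤ (n₀:ℝ) := by positivity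
      linarith
    have hm0 : (0:ℝ) < (n:ℝ) + n₀ := by linarith
    have hsum : ∑ i ∈ Finset.range (n + 1),
          (b / ((i : ℝ) + n₀) ^ ρ') * ∏ j ∈ Finset.Ico (i + 1) (n + 1), (1 - a / ((j : ℝ) + n₀))
        = (∑ i ∈ Finset.range n,
            (b / ((i : ℝ) + n₀) ^ ρ') * ∏ j ∈ Finset.Ico (i + 1) n, (1 - a / ((j : ℝ) + n₀)))
            * (1 - a / ((n : ℝ) + n₀)) + b / ((n : ℝ) + n₀) ^ ρ' := by
      rw [Finset.sum_range_succ, Finset.Ico_self, Finset.prod_empty, mul_one, Finset.sum_mul]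
      congr 1
      apply Finset.sum_congr rfl
      intro i hi
      rw [Finset.prod_Ico_succ_top (Finset.mem_range.mp hi)]
      ring
    rw [hsum]
    have hA1 : a / ((n:ℝ) + n₀) ≤ 1 := (ha01 n).2
    have hA0 : 0 < a / ((n:ℝ) + n₀) := by positivity
    have hB0 : 0 < b / ((n:ℝ) + n₀) ^ ρ' := by
      have := Real.rpow_pos_of_pos hm0 ρ'
      positivity
    have hstep : (∑ i ∈ Finset.range n,
            (b / ((i : ℝ) + n₀) ^ ρ') * ∏ j ∈ Finset.Ico (i + 1) n, (1 - a / ((j : ℝ) + n₀)))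
            * (1 - a / ((n : ℝ) + n₀)) + b / ((n : ℝ) + n₀) ^ ρ'
        ≤ (2 * (b / ((n : ℝ) + n₀) ^ ρ') / (a / ((n : ℝ) + n₀))) * (1 - a / ((n : ℝ) + n₀))
            + b / ((n : ℝ) + n₀) ^ ρ' := by
      have := mul_le_mul_of_nonneg_right ih (by linarith : 0 ≤ 1 - a / ((n:ℝ) + n₀))
      linarith
    have heq : (2 * (b / ((n : ℝ) + n₀) ^ ρ') / (a / ((n : ℝ) + n₀))) * (1 - a / ((n : ℝ) + n₀))
            + b / ((n : ℝ) + n₀) ^ ρ'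
        = 2 * (b / ((n : ℝ) + n₀) ^ ρ') / (a / ((n : ℝ) + n₀)) - b / ((n : ℝ) + n₀) ^ ρ' := by
      field_simp
      ring
    have hkey := key_step a b ρ' ((n:ℝ) + n₀) ha hb hρ'1 hρ'2 haρ' hm
    have hfin : ((n + 1 : ℕ) : ℝ) + n₀ = ((n:ℝ) + n₀) + 1 := by push_cast; ring
    rw [hfin]
    linarith [hstep, heq ▸ hstep]
end

section
/- Let a, b > 0, ρ ∈ (0,1), ρ' > ρ, and a_n := a/(n+n₀)^ρ, b_n := b/(n+n₀)^{ρ'}, with a_n ∈ [0,1] for all n. Define S_n := Σ_{i=0}^{n-1} b_i · Π_{j=i+1}^{n-1} (1 − a_j). If n₀ ≥ (2(ρ'−ρ)/a)^{1/(1−ρ)}, then S_n ≤ 2·b_n/a_n for all n ≥ 1. -/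
open Finset

private lemma mvt_aux {δ x : ℝ} (hδ : 0 < δ) (hx : 0 < x) :
    x ^ (-δ) - (x + 1) ^ (-δ) ≤ δ * x ^ (-δ - 1) := by
  obtain ⟨c, hc, hceq⟩ := exists_hasDerivAt_eq_slope (fun t : ℝ => t ^ (-δ))
      (fun t : ℝ => (-δ) * t ^ (-δ - 1)) (by linarith : x < x + 1)
      (continuousOn_id.rpow_const (fun t ht => Or.inl (ne_of_gt (lt_of_lt_of_le hx ht.1))))
      (fun t ht => Real.hasDerivAt_rpow_const (Or.inl (ne_of_gt (hx.trans ht.1))))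
  simp only [add_sub_cancel_left, div_one] at hceq
  have h1 : x ^ (-δ) - (x + 1) ^ (-δ) = δ * c ^ (-δ - 1) := by linarith
  rw [h1]
  exact mul_le_mul_of_nonneg_left
    (Real.rpow_le_rpow_of_nonpos hx hc.1.le (by linarith)) hδ.le

theorem stepsize_comparison_rho_lt_one (a b ρ ρ' : ℝ) (n₀ : ℕ)
    (ha : 0 < a) (hb : 0 < b)
    (hρ0 : 0 < ρ) (hρ1 : ρ < 1) (hρ' : ρ < ρ')
    (ha01 : ∀ n : ℕ, a / ((n : ℝ) + n₀) ^ ρ ∈ Set.Icc (0 : ℝ) 1)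
    (hn₀ : (2 * (ρ' - ρ) / a) ^ (1 / (1 - ρ)) ≤ (n₀ : ℝ)) :
    ∀ n : ℕ, 1 ≤ n →
      ∑ i ∈ Finset.range n,
          (b / ((i : ℝ) + n₀) ^ ρ') * ∏ j ∈ Finset.Ico (i + 1) n, (1 - a / ((j : ℝ) + n₀) ^ ρ) ≤
        2 * (b / ((n : ℝ) + n₀) ^ ρ') / (a / ((n : ℝ) + n₀) ^ ρ) := by
  set δ : ℝ := ρ' - ρ with hδdef
  have hδ : 0 < δ := by simp [hδdef]; linarith
  have hn₀pos : (0 : ℝ) < n₀ :=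
    lt_of_lt_of_le (Real.rpow_pos_of_pos (div_pos (by linarith) ha) _) hn₀
  have hx : ∀ n : ℕ, (0 : ℝ) < (n : ℝ) + n₀ := fun n =>
    add_pos_of_nonneg_of_pos (Nat.cast_nonneg n) hn₀pos
  have hxρ : ∀ n : ℕ, (0 : ℝ) < ((n : ℝ) + n₀) ^ ρ := fun n =>
    Real.rpow_pos_of_pos (hx n) ρ
  have hα_pos : ∀ n : ℕ, 0 < a / ((n : ℝ) + n₀) ^ ρ := fun n => div_pos ha (hxρ n)
  have hα_le_one : ∀ n : ℕ, a / ((n : ℝ) + n₀) ^ ρ ≤ 1 := fun n => (ha01 n).2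
  have ha_le : a ≤ (n₀ : ℝ) ^ ρ := by
    have h := (ha01 0).2
    rw [Nat.cast_zero, zero_add, div_le_one (Real.rpow_pos_of_pos hn₀pos ρ)] at h
    exact h
  have hpow : 2 * δ / a ≤ (n₀ : ℝ) ^ (1 - ρ) := by
    have h := Real.rpow_le_rpow (Real.rpow_nonneg (le_of_lt (div_pos (by linarith) ha)) _)
      hn₀ (by linarith : (0:ℝ) ≤ 1 - ρ)
    rwa [← Real.rpow_mul (le_of_lt (div_pos (by linarith) ha)),
      one_div, inv_mul_cancel₀ (by linarith : (1:ℝ) - ρ ≠ 0), Real.rpow_one] at h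
  have h2δ : 2 * δ ≤ (n₀ : ℝ) := by
    have h1 : 2 * δ ≤ a * (n₀ : ℝ) ^ (1 - ρ) := by
      rw [div_le_iff₀ ha] at hpow; linarith [hpow]
    calc 2 * δ ≤ a * (n₀ : ℝ) ^ (1 - ρ) := h1
      _ ≤ (n₀ : ℝ) ^ ρ * (n₀ : ℝ) ^ (1 - ρ) :=
          mul_le_mul_of_nonneg_right ha_le (Real.rpow_nonneg hn₀pos.le _)
      _ = (n₀ : ℝ) := by
          rw [← Real.rpow_add hn₀pos]; norm_num
  -- rewrite RHS in clean form
  have hC : ∀ n : ℕ, 2 * (b / ((n : ℝ) + n₀) ^ ρ') / (a / ((n : ℝ) + n₀) ^ ρ)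
      = 2 * b / a * ((n : ℝ) + n₀) ^ (-δ) := by
    intro n
    have h : ((n : ℝ) + n₀) ^ (-δ) = ((n : ℝ) + n₀) ^ ρ / ((n : ℝ) + n₀) ^ ρ' := by
      rw [show -δ = ρ - ρ' by simp [hδdef], Real.rpow_sub (hx n)]
    rw [h]
    have h1 := (hxρ n).ne'
    have h2 := (Real.rpow_pos_of_pos (hx n) ρ').ne'
    field_simp
  -- key step inequality
  have hkey : ∀ n : ℕ, 2 * b / a * ((n : ℝ) + n₀) ^ (-δ) - b / ((n : ℝ) + n₀) ^ ρ'
      ≤ 2 * b / a * (((n : ℝ) + n₀) + 1) ^ (-δ) := by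
    intro n
    set x : ℝ := (n : ℝ) + n₀ with hxdef
    have hx0 : 0 < x := hx n
    have hmvt := mvt_aux hδ hx0
    have hfrac : 2 * δ / a * x ^ (ρ - 1) ≤ 1 := by
      have hx1ρ : 2 * δ / a ≤ x ^ (1 - ρ) := by
        refine hpow.trans (Real.rpow_le_rpow hn₀pos.le ?_ (by linarith))
        simp [hxdef, Nat.cast_nonneg]
      have hrw : x ^ (ρ - 1) = (x ^ (1 - ρ))⁻¹ := by
        rw [← Real.rpow_neg hx0.le]; ring_nf
      rw [hrw, ← div_eq_mul_inv, div_le_one (Real.rpow_pos_of_pos hx0 _)]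
      exact hx1ρ
    have hsplit : x ^ (-δ - 1) = x ^ (ρ - 1) * x ^ (-ρ') := by
      rw [← Real.rpow_add hx0, hδdef]; ring_nf
    have hbρ' : b / x ^ ρ' = b * x ^ (-ρ') := by
      rw [Real.rpow_neg hx0.le, div_eq_mul_inv]
    have hxρ'pos : 0 < x ^ (-ρ') := Real.rpow_pos_of_pos hx0 _
    have hmain : 2 / a * (x ^ (-δ) - (x + 1) ^ (-δ)) ≤ x ^ (-ρ') := by
      calc 2 / a * (x ^ (-δ) - (x + 1) ^ (-δ)) ≤ 2 / a * (δ * x ^ (-δ - 1)) := by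
            apply mul_le_mul_of_nonneg_left hmvt (by positivity)
        _ = (2 * δ / a * x ^ (ρ - 1)) * x ^ (-ρ') := by rw [hsplit]; ring
        _ ≤ 1 * x ^ (-ρ') := mul_le_mul_of_nonneg_right hfrac hxρ'pos.le
        _ = x ^ (-ρ') := one_mul _
    rw [hbρ']
    have h2 := mul_le_mul_of_nonneg_left hmain hb.le
    have h3 : b * (2 / a * (x ^ (-δ) - (x + 1) ^ (-δ)))
        = 2 * b / a * x ^ (-δ) - 2 * b / a * (x + 1) ^ (-δ) := by ring
    nlinarith [h2, h3]
  -- base inequality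
  have hbase : b / ((0 : ℝ) + n₀) ^ ρ' ≤ 2 * b / a * ((1 : ℝ) + n₀) ^ (-δ) := by
    have h1n₀ : (0:ℝ) < 1 + n₀ := by linarith
    have hquot : ((1 : ℝ) + n₀) ^ δ ≤ 2 * (n₀ : ℝ) ^ δ := by
      have hfac : (1 : ℝ) + n₀ = n₀ * (1 + 1 / n₀) := by field_simp; ring
      have hlog : (1 + 1 / (n₀:ℝ)) ^ δ ≤ 2 := by
        have hpos : (0:ℝ) < 1 + 1 / n₀ := by positivity
        rw [← Real.exp_log (by norm_num : (0:ℝ) < 2), Real.rpow_def_of_pos hpos,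
          Real.exp_le_exp]
        have hl : Real.log (1 + 1 / (n₀:ℝ)) ≤ 1 / n₀ := by
          have := Real.log_le_sub_one_of_pos hpos
          linarith
        have hδn : δ * (1 / (n₀:ℝ)) ≤ 1 / 2 := by
          rw [mul_one_div, div_le_div_iff₀ hn₀pos (by norm_num : (0:ℝ) < 2)]
          linarith
        have hlog2 : (1:ℝ) / 2 < Real.log 2 := by
          have := Real.log_two_gt_d9; linarith
        have := mul_le_mul_of_nonneg_left hl hδ.le
        linarith
      calc ((1 : ℝ) + n₀) ^ δ = (n₀:ℝ) ^ δ * (1 + 1 / n₀) ^ δ := by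
            rw [hfac, Real.mul_rpow hn₀pos.le (by positivity)]
        _ ≤ (n₀:ℝ) ^ δ * 2 := mul_le_mul_of_nonneg_left hlog (Real.rpow_nonneg hn₀pos.le _)
        _ = 2 * (n₀ : ℝ) ^ δ := by ring
    have hden : a * ((1:ℝ) + n₀) ^ δ ≤ 2 * ((n₀:ℝ) ^ ρ * (n₀:ℝ) ^ δ) := by
      calc a * ((1:ℝ) + n₀) ^ δ ≤ (n₀:ℝ) ^ ρ * (2 * (n₀:ℝ) ^ δ) :=
            mul_le_mul ha_le hquot (by positivity) (by positivity)
        _ = 2 * ((n₀:ℝ) ^ ρ * (n₀:ℝ) ^ δ) := by ring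
    have hρ'split : ((n₀:ℝ)) ^ ρ' = (n₀:ℝ) ^ ρ * (n₀:ℝ) ^ δ := by
      rw [← Real.rpow_add hn₀pos]; simp [hδdef]
    rw [zero_add, hρ'split, Real.rpow_neg h1n₀.le, ← div_eq_mul_inv, div_div,
      div_le_div_iff₀ (by positivity) (by positivity)]
    nlinarith [mul_le_mul_of_nonneg_left hden hb.le]
  -- induction
  refine Nat.le_induction ?_ ?_
  · rw [hC 1]
    simp only [Finset.sum_range_one, Finset.Ico_self, Finset.prod_empty, mul_one,
      Nat.cast_zero, Nat.cast_one]
    exact hbase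
  · intro n hn ih
    have hAne : a / ((n:ℝ) + n₀) ^ ρ ≠ 0 := ne_of_gt (hα_pos n)
    have hsum : ∑ i ∈ Finset.range (n+1),
          (b / ((i : ℝ) + n₀) ^ ρ') * ∏ j ∈ Finset.Ico (i + 1) (n+1), (1 - a / ((j : ℝ) + n₀) ^ ρ)
        = (1 - a / ((n:ℝ) + n₀) ^ ρ) * ∑ i ∈ Finset.range n,
            (b / ((i : ℝ) + n₀) ^ ρ') * ∏ j ∈ Finset.Ico (i + 1) n, (1 - a / ((j : ℝ) + n₀) ^ ρ)
          + b / ((n:ℝ) + n₀) ^ ρ' := by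
      rw [Finset.sum_range_succ, Finset.Ico_self, Finset.prod_empty, mul_one, Finset.mul_sum]
      congr 1
      apply Finset.sum_congr rfl
      intro i hi
      rw [Finset.prod_Ico_succ_top (Nat.succ_le_of_lt (Finset.mem_range.mp hi))]
      ring
    rw [hsum, hC (n+1)]
    have h1mα : 0 ≤ 1 - a / ((n:ℝ) + n₀) ^ ρ := by linarith [hα_le_one n]
    calc (1 - a / ((n:ℝ) + n₀) ^ ρ) * ∑ i ∈ Finset.range n,
            (b / ((i : ℝ) + n₀) ^ ρ') * ∏ j ∈ Finset.Ico (i + 1) n, (1 - a / ((j : ℝ) + n₀) ^ ρ)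
          + b / ((n:ℝ) + n₀) ^ ρ'
        ≤ (1 - a / ((n:ℝ) + n₀) ^ ρ) *
            (2 * (b / ((n : ℝ) + n₀) ^ ρ') / (a / ((n : ℝ) + n₀) ^ ρ))
          + b / ((n:ℝ) + n₀) ^ ρ' :=
          add_le_add_left (mul_le_mul_of_nonneg_left ih h1mα) _
      _ = 2 * (b / ((n : ℝ) + n₀) ^ ρ') / (a / ((n : ℝ) + n₀) ^ ρ) - b / ((n:ℝ) + n₀) ^ ρ' := by
          field_simp
          ring
      _ = 2 * b / a * ((n : ℝ) + n₀) ^ (-δ) - b / ((n:ℝ) + n₀) ^ ρ' := by rw [hC n]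
      _ ≤ 2 * b / a * (((n : ℝ) + n₀) + 1) ^ (-δ) := hkey n
      _ = 2 * b / a * (((n+1 : ℕ) : ℝ) + n₀) ^ (-δ) := by
          congr 2
          push_cast
          ring
end
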